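/- Let Φ : [0,∞) → ℝ be concave and monotone increasing with Φ(0) = 0, and let φ = ψ = Φ(|·|). Let w : ℝ^d → [0,∞) be a compactly supported probability density (∫ w = 1). Then for every probability measure f on ℝ^d (for which the defining integrals exist), the continuous energy functional satisfies the lower bound ℰ[f] ≥ −∫_{ℝ^d} w(x) Φ(|x|) dx; in particular ℰ is bounded from below on the set of probability measures. -/

import Mathlib

open MeasureTheory

lemma conc_subadd {Φ : ℝ → ℝ} (hconc : ConcaveOn ℝ (Set.Ici 0) Φ) (hΦ0 : Φ 0 = 0)
    {a b : ℝ} (ha : 0 ≤ a) (hb : 0 ≤ b) : Φ (a + b) ≤ Φ a + Φ b := by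
  rcases eq_or_lt_of_le (add_nonneg ha hb) with h | hs
  · have ha0 : a = 0 := by linarith
    have hb0 : b = 0 := by linarith
    simp [ha0, hb0, hΦ0]
  · have hsne : a + b ≠ 0 := ne_of_gt hs
    have h1 := hconc.2 (Set.mem_Ici.2 le_rfl) (Set.mem_Ici.2 hs.le)
      (div_nonneg hb hs.le) (div_nonneg ha hs.le) (by field_simp; ring)
    have h2 := hconc.2 (Set.mem_Ici.2 le_rfl) (Set.mem_Ici.2 hs.le)
      (div_nonneg ha hs.le) (div_nonneg hb hs.le) (by field_simp)
    simp only [smul_eq_mul, smul_zero, mul_zero, zero_add, hΦ0] at h1 h2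
    rw [div_mul_cancel₀ _ hsne] at h1 h2
    have key : a / (a + b) * Φ (a + b) + b / (a + b) * Φ (a + b) = Φ (a + b) := by
      field_simp
    linarith

/-- For `Φ : [0,∞) → ℝ` concave, monotone increasing with `Φ(0) = 0` and
equal radial kernels `φ = ψ = Φ(|·|)`, the continuous energy functional
`ℰ[f] = ∫∫ w(x)Φ(|p−x|) df(p) dx − (1/2)∫∫ Φ(|p−x|) df(x) df(p)`
satisfies `ℰ[f] ≥ −∫ w(x)Φ(|x|) dx` for every probability measure `f` (for which the
defining integrals exist); in particular `ℰ` is bounded from below. -/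
theorem energy_bounded_below {d : ℕ} (Φ : ℝ → ℝ)
    (hconc : ConcaveOn ℝ (Set.Ici 0) Φ)
    (hmono : MonotoneOn Φ (Set.Ici 0))
    (hΦ0 : Φ 0 = 0)
    (w : EuclideanSpace ℝ (Fin d) → ℝ)
    (hw0 : ∀ x, 0 ≤ w x) (hwint : Integrable w) (hwsupp : HasCompactSupport w)
    (hwnorm : ∫ x, w x = 1)
    (f : Measure (EuclideanSpace ℝ (Fin d))) (hf : IsProbabilityMeasure f)
    -- existence of the defining integrals
    (h1 : ∀ x : EuclideanSpace ℝ (Fin d), Integrable (fun p => Φ ‖p - x‖) f)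
    (h2 : Integrable (fun x => w x * ∫ p, Φ ‖p - x‖ ∂f))
    (h3 : ∀ p : EuclideanSpace ℝ (Fin d), Integrable (fun x => Φ ‖p - x‖) f)
    (h4 : Integrable (fun p => ∫ x, Φ ‖p - x‖ ∂f) f)
    (h5 : Integrable (fun x => w x * Φ ‖x‖)) :
    -(∫ x, w x * Φ ‖x‖) ≤
      (∫ x, w x * ∫ p, Φ ‖p - x‖ ∂f) -
        (1 / 2) * ∫ p, ∫ x, Φ ‖p - x‖ ∂f ∂f := by
  have hΦnn : ∀ t : ℝ, 0 ≤ t → 0 ≤ Φ t := fun t ht =>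
    hΦ0 ▸ hmono (Set.mem_Ici.2 le_rfl) (Set.mem_Ici.2 ht) ht
  have tri : ∀ p q z : EuclideanSpace ℝ (Fin d), Φ ‖p - q‖ ≤ Φ ‖p - z‖ + Φ ‖q - z‖ := by
    intro p q z
    have h : ‖p - q‖ ≤ ‖p - z‖ + ‖q - z‖ := by
      have := dist_triangle p z q
      simpa [dist_eq_norm, norm_sub_rev z q] using this
    calc Φ ‖p - q‖ ≤ Φ (‖p - z‖ + ‖q - z‖) :=
          hmono (Set.mem_Ici.2 (norm_nonneg _))
            (Set.mem_Ici.2 (by positivity)) h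
      _ ≤ Φ ‖p - z‖ + Φ ‖q - z‖ :=
          conc_subadd hconc hΦ0 (norm_nonneg _) (norm_nonneg _)
  set I := ∫ p, ∫ x, Φ ‖p - x‖ ∂f ∂f with hI
  have key : ∀ z, I ≤ 2 * ∫ p, Φ ‖p - z‖ ∂f := by
    intro z
    have step1 : ∀ p, ∫ x, Φ ‖p - x‖ ∂f ≤ Φ ‖p - z‖ + ∫ x, Φ ‖x - z‖ ∂f := by
      intro p
      have hle : ∫ x, Φ ‖p - x‖ ∂f ≤ ∫ x, (Φ ‖p - z‖ + Φ ‖x - z‖) ∂f :=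
        integral_mono (h3 p) ((integrable_const _).add (h1 z)) (fun x => tri p x z)
      rwa [integral_add (integrable_const _) (h1 z), integral_const, probReal_univ,
        one_smul] at hle
    calc I ≤ ∫ p, (Φ ‖p - z‖ + ∫ x, Φ ‖x - z‖ ∂f) ∂f :=
          integral_mono h4 ((h1 z).add (integrable_const _)) step1
      _ = (∫ p, Φ ‖p - z‖ ∂f) + ∫ x, Φ ‖x - z‖ ∂f := by
          rw [integral_add (h1 z) (integrable_const _), integral_const, probReal_univ,
            one_smul]
      _ = 2 * ∫ p, Φ ‖p - z‖ ∂f := by ring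
  have hwg : (1 / 2) * I ≤ ∫ x, w x * ∫ p, Φ ‖p - x‖ ∂f := by
    have hmain : ∫ x, w x * ((1 / 2) * I) ≤ ∫ x, w x * ∫ p, Φ ‖p - x‖ ∂f := by
      refine integral_mono (hwint.mul_const _) h2 (fun x => ?_)
      exact mul_le_mul_of_nonneg_left (by linarith [key x]) (hw0 x)
    rwa [integral_mul_const, hwnorm, one_mul] at hmain
  have hpos : 0 ≤ ∫ x, w x * Φ ‖x‖ :=
    integral_nonneg fun x => mul_nonneg (hw0 x) (hΦnn _ (norm_nonneg x))
  linarith
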